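/- Let ω⁻ = B₁ ∩ {x₁ < 0} and ξ ∈ H¹₀(ω⁻) satisfy the variational inequality ∫_{ω⁻} ∇ξ·∇(v−ξ) dx ≥ −∫_{ω⁻} x₁(v−ξ) dx for all v ∈ K = {v ∈ H¹₀(ω⁻) : |v| ≤ c} with c > 0. Then ξ ≥ 0 in ω⁻. -/

import Mathlib

open MeasureTheory Set

/-- derivative of the squared negative part -/
lemma hasDerivAt_minsq (t : ℝ) :
    HasDerivAt (fun s : ℝ => (min s 0) ^ 2) (2 * min t 0) t := by
  rcases lt_trichotomy t 0 with ht | ht | ht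
  · have h1 : HasDerivAt (fun s : ℝ => s ^ 2) (2 * t) t := by
      simpa using hasDerivAt_pow 2 t
    have h2 : (fun s : ℝ => (min s 0) ^ 2) =ᶠ[nhds t] fun s : ℝ => s ^ 2 := by
      filter_upwards [Iio_mem_nhds ht] with s hs
      rw [min_eq_left (le_of_lt hs)]
    rw [min_eq_left ht.le]
    exact h1.congr_of_eventuallyEq h2
  · subst ht
    rw [min_self, mul_zero]
    rw [hasDerivAt_iff_isLittleO]
    rw [Asymptotics.isLittleO_iff]
    intro ε hε
    filter_upwards [Metric.ball_mem_nhds 0 hε] with s hs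
    have hsimp : (min s 0) ^ 2 - (min (0:ℝ) 0) ^ 2 - (s - 0) • (0:ℝ) = (min s 0) ^ 2 := by
      simp
    rw [hsimp, sub_zero]
    have h1 : |min s 0| ≤ |s| := by
      rcases le_or_gt s 0 with h | h
      · rw [min_eq_left h]
      · rw [min_eq_right h.le]; simp [abs_nonneg]
    have h2 : |s| < ε := by simpa [Real.dist_eq] using hs
    have : ‖(min s 0) ^ 2‖ = |min s 0| ^ 2 := by
      rw [Real.norm_eq_abs, ← abs_pow, abs_pow]
    rw [this]
    calc |min s 0| ^ 2 ≤ |s| * |s| := by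
          rw [sq]; exact mul_le_mul h1 h1 (abs_nonneg _) (abs_nonneg _)
      _ ≤ ε * ‖s‖ := by
          rw [Real.norm_eq_abs]
          exact mul_le_mul_of_nonneg_right h2.le (abs_nonneg _)
  · have h2 : (fun s : ℝ => (min s 0) ^ 2) =ᶠ[nhds t] fun _ : ℝ => (0 : ℝ) := by
      filter_upwards [Ioi_mem_nhds ht] with s hs
      rw [min_eq_right (le_of_lt hs)]; simp
    rw [min_eq_right ht.le, mul_zero]
    exact (hasDerivAt_const t 0).congr_of_eventuallyEq h2

/-- If `ξ ∈ H¹₀(ω⁻)`, `ω⁻ = B₁ ∩ {x₁ < 0}`, satisfies the variational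
inequality `∫_{ω⁻} ∇ξ·∇(v−ξ) ≥ −∫_{ω⁻} x₁(v−ξ)` for all `v` in the constraint
set `K = {v ∈ H¹₀(ω⁻) : |v| ≤ c}` (with `c > 0`), then `ξ ≥ 0` a.e. in `ω⁻`. -/
theorem variational_inequality_nonneg
    (c : ℝ) (hc : 0 < c)
    (ωm : Set (ℝ × ℝ)) (hωm : ωm = {x : ℝ × ℝ | x.1 ^ 2 + x.2 ^ 2 < 1 ∧ x.1 < 0})
    (K : Set (ℝ × ℝ → ℝ))
    (hK : K = {v | DifferentiableOn ℝ v ωm ∧ Continuous v ∧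
      (∀ x ∉ ωm, v x = 0) ∧ ∀ x, |v x| ≤ c})
    (ξ : ℝ × ℝ → ℝ) (hmem : ξ ∈ K)
    (hVI : ∀ v ∈ K,
      (∫ x in ωm, (fderiv ℝ ξ x (1, 0) * (fderiv ℝ v x (1, 0) - fderiv ℝ ξ x (1, 0))
          + fderiv ℝ ξ x (0, 1) * (fderiv ℝ v x (0, 1) - fderiv ℝ ξ x (0, 1))))
        ≥ -∫ x in ωm, x.1 * (v x - ξ x)) :
    ∀ᵐ x ∂(volume.restrict ωm), 0 ≤ ξ x := by
  have hc0 : c ≠ 0 := ne_of_gt hc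
  rw [hK] at hmem
  obtain ⟨hdiff, hcont, hzero, hbound⟩ := hmem
  -- basic facts about ωm
  have hopen : IsOpen ωm := by
    rw [hωm]
    have : {x : ℝ × ℝ | x.1 ^ 2 + x.2 ^ 2 < 1 ∧ x.1 < 0}
        = {x : ℝ × ℝ | x.1 ^ 2 + x.2 ^ 2 < 1} ∩ {x : ℝ × ℝ | x.1 < 0} := rfl
    rw [this]
    exact (isOpen_lt (by fun_prop) continuous_const).inter
      (isOpen_lt continuous_fst continuous_const)
  have hmeas : MeasurableSet ωm := hopen.measurableSet
  have hneg : ∀ x ∈ ωm, x.1 < 0 := by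
    rw [hωm]; exact fun x hx => hx.2
  have hbdd : ωm ⊆ Metric.closedBall 0 1 := by
    rw [hωm]
    intro x hx
    rw [Metric.mem_closedBall, dist_zero_right, Prod.norm_def]
    have h1 : x.1 ^ 2 ≤ 1 := by nlinarith [hx.1, sq_nonneg x.2]
    have h2 : x.2 ^ 2 ≤ 1 := by nlinarith [hx.1, sq_nonneg x.1]
    have h1' : ‖x.1‖ ≤ 1 := by rw [Real.norm_eq_abs]; nlinarith [abs_nonneg x.1, sq_abs x.1]
    have h2' : ‖x.2‖ ≤ 1 := by rw [Real.norm_eq_abs]; nlinarith [abs_nonneg x.2, sq_abs x.2]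
    exact max_le h1' h2'
  -- the test function
  set ψ : ℝ → ℝ := fun t => t + (min t 0) ^ 2 / (2 * c) with hψdef
  have hψderiv : ∀ t : ℝ, HasDerivAt ψ (1 + min t 0 / c) t := by
    intro t
    have h := (hasDerivAt_id t).add ((hasDerivAt_minsq t).div_const (2 * c))
    have : 1 + 2 * min t 0 / (2 * c) = 1 + min t 0 / c := by
      rw [mul_div_mul_left _ _ (two_ne_zero)]
    rw [this] at h; exact h
  set v : ℝ × ℝ → ℝ := fun x => ψ (ξ x) with hvdef
  have hvsub : ∀ x, v x - ξ x = (min (ξ x) 0) ^ 2 / (2 * c) := by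
    intro x; simp [hvdef, hψdef]
  have hvK : v ∈ K := by
    rw [hK]
    refine ⟨?_, ?_, ?_, ?_⟩
    · intro x hx
      have h1 : DifferentiableAt ℝ ξ x := (hdiff x hx).differentiableAt (hopen.mem_nhds hx)
      exact ((hψderiv (ξ x)).differentiableAt.comp x h1).differentiableWithinAt
    · have hψc : Continuous ψ := by
        apply Continuous.add continuous_id
        exact ((continuous_id.min continuous_const).pow 2).div_const _
      exact hψc.comp hcont
    · intro x hx
      simp [hvdef, hψdef, hzero x hx]
    · intro x
      have hb := hbound x
      rw [abs_le] at hb ⊢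
      rcases le_or_gt 0 (ξ x) with h | h
      · rw [hvdef]
        simp only [hψdef, min_eq_right h]
        norm_num
        constructor <;> linarith [hb.1, hb.2]
      · rw [hvdef]
        simp only [hψdef, min_eq_left h.le]
        have h2c : (0:ℝ) < 2 * c := by linarith
        have hd1 : (0:ℝ) ≤ ξ x ^ 2 / (2 * c) := by positivity
        have hd2 : ξ x ^ 2 / (2 * c) ≤ -ξ x / 2 := by
          rw [div_le_div_iff₀ h2c (by norm_num : (0:ℝ) < 2)]
          nlinarith [hb.1]
        constructor <;> linarith [hb.1, hb.2]
  -- fderiv of v on ωm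
  have hfdv : ∀ x ∈ ωm, ∀ u : ℝ × ℝ,
      fderiv ℝ v x u = (1 + min (ξ x) 0 / c) * fderiv ℝ ξ x u := by
    intro x hx u
    have h1 : DifferentiableAt ℝ ξ x := (hdiff x hx).differentiableAt (hopen.mem_nhds hx)
    have h2 : HasFDerivAt v ((1 + min (ξ x) 0 / c) • fderiv ℝ ξ x) x :=
      (hψderiv (ξ x)).comp_hasFDerivAt x h1.hasFDerivAt
    rw [h2.fderiv]
    simp [smul_eq_mul]
  -- LHS integral is nonpositive
  have hI1 : (∫ x in ωm, (fderiv ℝ ξ x (1, 0) * (fderiv ℝ v x (1, 0) - fderiv ℝ ξ x (1, 0))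
          + fderiv ℝ ξ x (0, 1) * (fderiv ℝ v x (0, 1) - fderiv ℝ ξ x (0, 1)))) ≤ 0 := by
    apply integral_nonpos_of_ae
    filter_upwards [ae_restrict_mem hmeas] with x hx
    simp only [Pi.zero_apply]
    rw [hfdv x hx (1, 0), hfdv x hx (0, 1)]
    have hs : min (ξ x) 0 / c ≤ 0 := div_nonpos_of_nonpos_of_nonneg (min_le_right _ _) hc.le
    set a := fderiv ℝ ξ x (1, 0)
    set b := fderiv ℝ ξ x (0, 1)
    set s := min (ξ x) 0 / c
    nlinarith [sq_nonneg a, sq_nonneg b]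
  -- RHS integral nonpositive
  have hI2 : (∫ x in ωm, x.1 * (v x - ξ x)) ≤ 0 := by
    apply integral_nonpos_of_ae
    filter_upwards [ae_restrict_mem hmeas] with x hx
    simp only [Pi.zero_apply]
    rw [hvsub x]
    apply mul_nonpos_of_nonpos_of_nonneg (hneg x hx).le
    positivity
  -- combine with the variational inequality
  have hVIv := hVI v hvK
  have hI2' : (0 : ℝ) ≤ ∫ x in ωm, x.1 * (v x - ξ x) := by
    have : -(∫ x in ωm, x.1 * (v x - ξ x)) ≤ 0 := le_trans hVIv hI1
    linarith
  have hI2eq : (∫ x in ωm, x.1 * (v x - ξ x)) = 0 := le_antisymm hI2 hI2'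
  -- integrability of the RHS integrand
  set h : ℝ × ℝ → ℝ := fun x => x.1 * (v x - ξ x) with hhdef
  have hhcont : Continuous h := by
    apply continuous_fst.mul
    apply Continuous.sub _ hcont
    have hψc : Continuous ψ := by
      apply Continuous.add continuous_id
      exact ((continuous_id.min continuous_const).pow 2).div_const _
    exact hψc.comp hcont
  have hhsupp : HasCompactSupport h := by
    apply HasCompactSupport.intro (isCompact_closedBall (0 : ℝ × ℝ) 1)
    intro x hx
    have hxnot : x ∉ ωm := fun hmem' => hx (hbdd hmem')
    have hv0 : v x - ξ x = 0 := by
      rw [hvsub x, hzero x hxnot]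
      simp
    simp [hhdef, hv0]
  have hhint : IntegrableOn h ωm := (hhcont.integrable_of_hasCompactSupport hhsupp).integrableOn
  -- deduce the integrand vanishes a.e.
  have hnegint : IntegrableOn (fun x => -h x) ωm := hhint.neg
  have hnegnn : 0 ≤ᵐ[volume.restrict ωm] fun x => -h x := by
    filter_upwards [ae_restrict_mem hmeas] with x hx
    simp only [Pi.zero_apply]
    have : h x ≤ 0 := by
      rw [hhdef]
      simp only
      rw [hvsub x]
      apply mul_nonpos_of_nonpos_of_nonneg (hneg x hx).le
      positivity
    linarith
  have hnegzero : (∫ x in ωm, -h x) = 0 := by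
    rw [integral_neg]
    rw [hhdef] at *
    simp only at hI2eq ⊢
    rw [hI2eq, neg_zero]
  have haezero : (fun x => -h x) =ᵐ[volume.restrict ωm] 0 :=
    (integral_eq_zero_iff_of_nonneg_ae hnegnn hnegint).1 hnegzero
  filter_upwards [haezero, ae_restrict_mem hmeas] with x hx0 hxm
  have hx1 : x.1 < 0 := hneg x hxm
  have hhx : h x = 0 := by
    have := hx0
    simp only [Pi.zero_apply] at this
    linarith
  rw [hhdef] at hhx
  simp only at hhx
  rw [hvsub x] at hhx
  have hfac : (min (ξ x) 0) ^ 2 / (2 * c) = 0 := by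
    rcases mul_eq_zero.1 hhx with h' | h'
    · exact absurd h' (ne_of_lt hx1)
    · exact h'
  have hmin : min (ξ x) 0 = 0 := by
    rcases div_eq_zero_iff.1 hfac with h' | h'
    · nlinarith [sq_nonneg (min (ξ x) 0), min_le_right (ξ x) (0:ℝ),
        abs_nonneg (min (ξ x) 0), sq_abs (min (ξ x) 0)]
    · exact absurd h' (ne_of_gt (by linarith))
  by_contra hlt
  push_neg at hlt
  rw [min_eq_left hlt.le] at hmin
  exact absurd hmin (ne_of_lt hlt)
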